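/- arXiv:1702.05419 — 3 statements merged into one kernel-verified Lean document; each statement's English description precedes it below -/
import Mathlib

section
/- Let w be a standard Gaussian vector in ℝ^p and a, b ∈ ℝ^p. For σ(t) = cos(t), E[σ(w^T a)·σ(w^T b)] = exp(−(‖a‖² + ‖b‖²)/2)·cosh(a^T b). -/
open MeasureTheory ProbabilityTheory Real BigOperators

section aux
open Complex NNReal ENNReal

theorem gck_prod_int {n : ℕ} (μ : Fin n → Measure ℝ) [∀ i, SigmaFinite (μ i)]
    (f : Fin n → ℝ → ℂ) :
    ∫ x : Fin n → ℝ, ∏ i, f i (x i) ∂(Measure.pi μ) = ∏ i, ∫ x, f i x ∂(μ i) := by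
  induction n with
  | zero => simp [Measure.pi_empty_univ, measureReal_def]
  | succ n n_ih =>
      calc
        _ = ∫ x : ℝ × (Fin n → ℝ),
            f 0 x.1 * ∏ i : Fin n, f i.succ (x.2 i)
              ∂((μ 0).prod (Measure.pi fun i => μ i.succ)) := by
          rw [← ((measurePreserving_piFinSuccAbove μ 0).symm).integral_comp']
          simp_rw [MeasurableEquiv.piFinSuccAbove_symm_apply, Fin.insertNthEquiv,
            Fin.prod_univ_succ, Fin.insertNth_zero, Equiv.coe_fn_mk, Fin.cons_succ,
            Fin.zero_succAbove, cast_eq, Fin.cons_zero]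
        _ = (∫ x, f 0 x ∂(μ 0)) * ∏ i : Fin n, ∫ x, f i.succ x ∂(μ i.succ) := by
          rw [← n_ih, ← integral_prod_mul]
        _ = ∏ i, ∫ x, f i x ∂(μ i) := by rw [Fin.prod_univ_succ]

theorem gck_char1 (c : ℝ) :
    ∫ x : ℝ, Complex.exp (Complex.I * c * x) ∂(gaussianReal 0 1) =
      (Real.exp (-(c ^ 2) / 2) : ℂ) := by
  rw [gaussianReal_of_var_ne_zero 0 one_ne_zero]
  have hd : (gaussianPDF 0 1) = fun x => ((Real.toNNReal (gaussianPDFReal 0 1 x) : ℝ≥0) : ℝ≥0∞) := by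
    ext x; rfl
  rw [hd, integral_withDensity_eq_integral_smul
    ((measurable_gaussianPDFReal 0 1).real_toNNReal)]
  have hpdf : ∀ x : ℝ, (Real.toNNReal (gaussianPDFReal 0 1 x) : ℝ≥0) •
      Complex.exp (Complex.I * c * x)
      = ((Real.sqrt (2 * π))⁻¹ : ℂ) * (Complex.exp (Complex.I * c * x) *
          Complex.exp (-(1/2 : ℂ) * x ^ 2)) := by
    intro x
    rw [NNReal.smul_def, Real.coe_toNNReal _ (gaussianPDFReal_nonneg 0 1 x)]
    rw [Complex.real_smul, gaussianPDFReal]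
    push_cast
    ring_nf
  simp_rw [hpdf]
  rw [integral_const_mul, fourierIntegral_gaussian (by norm_num : (0:ℝ) < (1/2 : ℂ).re) (c : ℂ)]
  have h2 : ((π : ℂ) / (1/2)) ^ (1/2 : ℂ) = (Real.sqrt (2 * π) : ℂ) := by
    rw [show ((π:ℂ)/(1/2)) = ((2*π : ℝ) : ℂ) by push_cast; ring,
        show (1/2 : ℂ) = ((1/2 : ℝ) : ℂ) by norm_num,
        ← Complex.ofReal_cpow (by positivity), Real.sqrt_eq_rpow]
  rw [h2, Complex.ofReal_exp]
  have h2' : ((Real.sqrt 2 : ℝ) : ℂ) ≠ 0 := Complex.ofReal_ne_zero.2 (by positivity)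
  have h3' : ((Real.sqrt π : ℝ) : ℂ) ≠ 0 := Complex.ofReal_ne_zero.2 (by positivity)
  rw [Real.sqrt_mul (by norm_num : (0:ℝ) ≤ 2)]
  push_cast
  field_simp
  ring_nf

theorem gck_charN {p : ℕ} (c : Fin p → ℝ) :
    ∫ w : Fin p → ℝ, Complex.exp (Complex.I * (∑ i, w i * c i : ℝ))
        ∂(Measure.pi fun _ => gaussianReal 0 1) =
      (Real.exp (-(∑ i, c i ^ 2) / 2) : ℂ) := by
  have h : ∀ w : Fin p → ℝ, Complex.exp (Complex.I * (∑ i, w i * c i : ℝ))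
      = ∏ i, Complex.exp (Complex.I * (c i) * (w i)) := by
    intro w
    rw [← Complex.exp_sum]
    congr 1
    push_cast
    rw [Finset.mul_sum]
    exact Finset.sum_congr rfl fun i _ => by ring
  simp_rw [h]
  rw [gck_prod_int (fun _ => gaussianReal 0 1) (fun i x => Complex.exp (Complex.I * c i * x))]
  simp_rw [gck_char1]
  rw [← Complex.ofReal_prod, ← Real.exp_sum]
  congr 1
  rw [← Finset.sum_div, ← Finset.sum_neg_distrib]

theorem gck_cos_integrable {p : ℕ} (c : Fin p → ℝ) :
    Integrable (fun w : Fin p → ℝ => Real.cos (∑ i, w i * c i))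
      (Measure.pi fun _ => gaussianReal 0 1) := by
  refine (integrable_const 1).mono' ?_ (ae_of_all _ fun w => ?_)
  · exact (Real.continuous_cos.comp
      (continuous_finset_sum _ fun i _ => (continuous_apply i).mul continuous_const)).aestronglyMeasurable
  · simp [Real.abs_cos_le_one]

theorem gck_cosN {p : ℕ} (c : Fin p → ℝ) :
    ∫ w : Fin p → ℝ, Real.cos (∑ i, w i * c i)
        ∂(Measure.pi fun _ => gaussianReal 0 1) =
      Real.exp (-(∑ i, c i ^ 2) / 2) := by
  have hint : Integrable (fun w : Fin p → ℝ => Complex.exp (Complex.I * (∑ i, w i * c i : ℝ)))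
      (Measure.pi fun _ => gaussianReal 0 1) := by
    refine (integrable_const 1).mono' ?_ (ae_of_all _ fun w => ?_)
    · exact (Complex.continuous_exp.comp (continuous_const.mul
        (Complex.continuous_ofReal.comp
          (continuous_finset_sum _ fun i _ => (continuous_apply i).mul continuous_const)))).aestronglyMeasurable
    · rw [Complex.norm_exp]
      simp
  have hre : ∀ w : Fin p → ℝ, Real.cos (∑ i, w i * c i)
      = (Complex.exp (Complex.I * (∑ i, w i * c i : ℝ))).re := by
    intro w
    rw [show Complex.I * ((∑ i, w i * c i : ℝ) : ℂ) = ((∑ i, w i * c i : ℝ) : ℂ) * Complex.I by ring,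
      Complex.exp_ofReal_mul_I_re]
  simp_rw [hre]
  have h := integral_re hint
  simp only [RCLike.re_to_complex] at h
  rw [h, gck_charN, Complex.ofReal_re]

end aux

/-- For a standard Gaussian vector `w ∼ N(0, I_p)` and `a, b ∈ ℝᵖ`,
`E[cos(wᵀa)·cos(wᵀb)] = exp(−(‖a‖² + ‖b‖²)/2)·cosh(aᵀb)`. -/
theorem gaussian_cos_kernel {p : ℕ} (a b : Fin p → ℝ) :
    ∫ w : Fin p → ℝ, Real.cos (∑ i, w i * a i) * Real.cos (∑ i, w i * b i)
        ∂(Measure.pi fun _ => gaussianReal 0 1) =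
      Real.exp (-((∑ i, a i ^ 2) + ∑ i, b i ^ 2) / 2) * Real.cosh (∑ i, a i * b i) := by
  have hsum : ∀ w : Fin p → ℝ, Real.cos (∑ i, w i * a i) * Real.cos (∑ i, w i * b i)
      = Real.cos (∑ i, w i * (a i + b i)) / 2 + Real.cos (∑ i, w i * (a i - b i)) / 2 := by
    intro w
    have h1 : ∑ i, w i * (a i + b i) = (∑ i, w i * a i) + (∑ i, w i * b i) := by
      rw [← Finset.sum_add_distrib]; exact Finset.sum_congr rfl fun i _ => by ring
    have h2 : ∑ i, w i * (a i - b i) = (∑ i, w i * a i) - (∑ i, w i * b i) := by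
      rw [← Finset.sum_sub_distrib]; exact Finset.sum_congr rfl fun i _ => by ring
    rw [h1, h2, Real.cos_add, Real.cos_sub]; ring
  simp_rw [hsum]
  rw [integral_add ((gck_cos_integrable (fun i => a i + b i)).div_const 2)
      ((gck_cos_integrable (fun i => a i - b i)).div_const 2),
    integral_div, integral_div, gck_cosN, gck_cosN]
  have e1 : ∑ i, (a i + b i) ^ 2 = ((∑ i, a i ^ 2) + ∑ i, b i ^ 2) + 2 * ∑ i, a i * b i := by
    rw [Finset.mul_sum, ← Finset.sum_add_distrib, ← Finset.sum_add_distrib]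
    exact Finset.sum_congr rfl fun i _ => by ring
  have e2 : ∑ i, (a i - b i) ^ 2 = ((∑ i, a i ^ 2) + ∑ i, b i ^ 2) - 2 * ∑ i, a i * b i := by
    rw [Finset.mul_sum, ← Finset.sum_add_distrib, ← Finset.sum_sub_distrib]
    exact Finset.sum_congr rfl fun i _ => by ring
  rw [e1, e2, Real.cosh_eq,
    show (-(((∑ i, a i ^ 2) + ∑ i, b i ^ 2) + 2 * ∑ i, a i * b i) / 2)
      = -((∑ i, a i ^ 2) + ∑ i, b i ^ 2) / 2 + -(∑ i, a i * b i) by ring,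
    show (-(((∑ i, a i ^ 2) + ∑ i, b i ^ 2) - 2 * ∑ i, a i * b i) / 2)
      = -((∑ i, a i ^ 2) + ∑ i, b i ^ 2) / 2 + (∑ i, a i * b i) by ring,
    Real.exp_add, Real.exp_add]
  ring
end

section
/- Let w ∈ ℝ^p be a random vector with i.i.d. entries of mean zero, variance m₂, third moment m₃, and fourth moment m₄. For σ(t) = ζ₂t² + ζ₁t + ζ₀ and fixed a, b ∈ ℝ^p, E[σ(w^T a)·σ(w^T b)] = ζ₂²[m₂²(2(a^T b)² + ‖a‖²‖b‖²) + (m₄ − 3m₂²)(a²)^T(b²)] + ζ₁² m₂ a^T b + ζ₂ζ₁ m₃[(a²)^T b + a^T(b²)] + ζ₂ζ₀ m₂[‖a‖² + ‖b‖²] + ζ₀², where (a²) denotes the vector of squared entries of a. -/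
open MeasureTheory ProbabilityTheory BigOperators Finset

section aux
variable {Ω : Type*} [MeasureSpace Ω] [IsProbabilityMeasure (ℙ : Measure Ω)]

omit [IsProbabilityMeasure (ℙ : Measure Ω)] in
lemma iIndepFun_ae_congr {ι : Type*} {f g : ι → Ω → ℝ}
    (hf : iIndepFun f ℙ) (h : ∀ i, f i =ᵐ[ℙ] g i) :
    iIndepFun g ℙ := by
  rw [iIndepFun_iff_measure_inter_preimage_eq_mul] at hf ⊢
  intro S sets hsets
  have hpre : ∀ i : ι, (g i ⁻¹' sets i : Set Ω) =ᵐ[ℙ] (f i ⁻¹' sets i : Set Ω) := by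
    intro i
    filter_upwards [h i] with ω hω
    exact (congrArg (· ∈ sets i) hω).symm
  calc ℙ (⋂ i ∈ S, g i ⁻¹' sets i) = ℙ (⋂ i ∈ S, f i ⁻¹' sets i) :=
        measure_congr (Filter.EventuallyEq.biInter S.finite_toSet fun i _ => hpre i)
    _ = ∏ i ∈ S, ℙ (f i ⁻¹' sets i) := hf S hsets
    _ = ∏ i ∈ S, ℙ (g i ⁻¹' sets i) := by
        exact Finset.prod_congr rfl fun i _ => (measure_congr (hpre i)).symm

lemma integral_finset_prod_eq {ι : Type*} [DecidableEq ι] {v : ι → Ω → ℝ}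
    (hv : iIndepFun v ℙ) (hm : ∀ i, Measurable (v i))
    (hi : ∀ i, Integrable (v i) ℙ) (s : Finset ι) :
    Integrable (fun ω => ∏ i ∈ s, v i ω) ℙ ∧
      (∫ ω, ∏ i ∈ s, v i ω) = ∏ i ∈ s, ∫ ω, v i ω := by
  induction s using Finset.induction_on with
  | empty => simp [integrable_const]
  | @insert i s his ih =>
    have hind : IndepFun (∏ j ∈ s, v j) (v i) ℙ :=
      hv.indepFun_finsetProd_of_notMem hm his
    have hprodeq : (∏ j ∈ s, v j) = fun ω => ∏ j ∈ s, v j ω := by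
      funext ω; simp
    rw [hprodeq] at hind
    constructor
    · have := (hind.symm).integrable_mul (hi i) ih.1
      refine this.congr ?_
      filter_upwards with ω
      simp [Finset.prod_insert his]
    · have := hind.integral_fun_mul_eq_mul_integral ih.1.aestronglyMeasurable (hi i).aestronglyMeasurable
      simp only [Finset.prod_insert his]
      calc (∫ ω, v i ω * ∏ j ∈ s, v j ω) = ∫ ω, (∏ j ∈ s, v j ω) * v i ω := by
            congr 1; funext ω; ring
        _ = (∫ ω, ∏ j ∈ s, v j ω) * ∫ ω, v i ω := this
        _ = (∫ ω, v i ω) * ∏ j ∈ s, ∫ ω, v j ω := by rw [ih.2]; ring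

end aux

lemma abs_mul4_le (x y z u : ℝ) : |x*y*z*u| ≤ 1 + (x^4 + y^4 + z^4 + u^4) := by
  rw [abs_le]
  constructor <;>
  nlinarith [sq_nonneg (x*y - z*u), sq_nonneg (x*y + z*u), sq_nonneg (x^2 - y^2),
    sq_nonneg (z^2 - u^2), sq_nonneg (x*y), sq_nonneg (z*u), sq_nonneg x, sq_nonneg y,
    sq_nonneg z, sq_nonneg u]

lemma abs_pow_le_aux (x : ℝ) {k : ℕ} (hk : k ≤ 4) : |x| ^ k ≤ 1 + x ^ 4 := by
  have h4 : |x| ^ 4 = x ^ 4 := by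
    rw [pow_abs, abs_of_nonneg (by positivity)]
  rcases le_total |x| 1 with h | h
  · calc |x| ^ k ≤ 1 := pow_le_one₀ (abs_nonneg x) h
      _ ≤ 1 + x ^ 4 := by nlinarith [pow_nonneg (abs_nonneg x) 4, h4]
  · calc |x| ^ k ≤ |x| ^ 4 := pow_le_pow_right₀ h hk
      _ = x ^ 4 := h4
      _ ≤ 1 + x ^ 4 := by linarith

section aux2
variable {Ω : Type*} [MeasureSpace Ω] [IsProbabilityMeasure (ℙ : Measure Ω)]

omit [IsProbabilityMeasure (ℙ : Measure Ω)] in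
lemma integrable_pow4 {f : Ω → ℝ} (hf : MemLp f 4 ℙ) : Integrable (fun ω => f ω ^ 4) ℙ := by
  have h := hf.integrable_norm_rpow (by norm_num) (by norm_num)
  refine h.congr ?_
  filter_upwards with ω
  have : ((4:ENNReal).toReal) = ((4:ℕ):ℝ) := by simp
  rw [this, Real.rpow_natCast, Real.norm_eq_abs, pow_abs, abs_of_nonneg (by positivity)]

lemma integrable_pow_le {f : Ω → ℝ} (hf : MemLp f 4 ℙ) {k : ℕ} (hk : k ≤ 4) :
    Integrable (fun ω => f ω ^ k) ℙ := by
  refine Integrable.mono' ((integrable_const 1).add (integrable_pow4 hf)) ?_ ?_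
  · exact hf.aestronglyMeasurable.pow _
  · filter_upwards with ω
    simpa [Real.norm_eq_abs, abs_pow] using abs_pow_le_aux (f ω) hk

lemma integrable_mul4 {f g h k : Ω → ℝ} (hf : MemLp f 4 ℙ) (hg : MemLp g 4 ℙ)
    (hh : MemLp h 4 ℙ) (hk : MemLp k 4 ℙ) :
    Integrable (fun ω => f ω * g ω * h ω * k ω) ℙ := by
  have hG : Integrable (fun ω => 1 + (f ω ^ 4 + g ω ^ 4 + h ω ^ 4 + k ω ^ 4)) ℙ := by
    refine (integrable_const 1).add ?_
    exact (((integrable_pow4 hf).add (integrable_pow4 hg)).add (integrable_pow4 hh)).add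
      (integrable_pow4 hk)
  refine Integrable.mono' hG ?_ ?_
  · exact ((hf.aestronglyMeasurable.mul hg.aestronglyMeasurable).mul
      hh.aestronglyMeasurable).mul hk.aestronglyMeasurable
  · filter_upwards with ω
    rw [Real.norm_eq_abs]
    exact abs_mul4_le (f ω) (g ω) (h ω) (k ω)

lemma integrable_mul3 {f g h : Ω → ℝ} (hf : MemLp f 4 ℙ) (hg : MemLp g 4 ℙ)
    (hh : MemLp h 4 ℙ) : Integrable (fun ω => f ω * g ω * h ω) ℙ := by
  have := integrable_mul4 hf hg hh (memLp_const (1:ℝ) (p := 4))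
  simpa using this

lemma integrable_mul2 {f g : Ω → ℝ} (hf : MemLp f 4 ℙ) (hg : MemLp g 4 ℙ) :
    Integrable (fun ω => f ω * g ω) ℙ := by
  have := integrable_mul3 hf hg (memLp_const (1:ℝ) (p := 4))
  simpa using this

end aux2

section aux3
variable {Ω : Type*} [MeasureSpace Ω] {ι : Type*} (s : Finset ι)

lemma integral_sum2 (F : ι → ι → Ω → ℝ) (h : ∀ i j, Integrable (F i j) ℙ) :
    ∫ ω, ∑ i ∈ s, ∑ j ∈ s, F i j ω = ∑ i ∈ s, ∑ j ∈ s, ∫ ω, F i j ω := by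
  rw [integral_finset_sum s (fun i _ => integrable_finset_sum s (fun j _ => h i j))]
  exact Finset.sum_congr rfl fun i _ => integral_finset_sum s (fun j _ => h i j)

lemma integral_sum3 (F : ι → ι → ι → Ω → ℝ) (h : ∀ i j k, Integrable (F i j k) ℙ) :
    ∫ ω, ∑ i ∈ s, ∑ j ∈ s, ∑ k ∈ s, F i j k ω
      = ∑ i ∈ s, ∑ j ∈ s, ∑ k ∈ s, ∫ ω, F i j k ω := by
  rw [integral_finset_sum s (fun i _ =>
    integrable_finset_sum s (fun j _ => integrable_finset_sum s (fun k _ => h i j k)))]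
  exact Finset.sum_congr rfl fun i _ => integral_sum2 s (F i) (h i)

lemma integral_sum4 (F : ι → ι → ι → ι → Ω → ℝ) (h : ∀ i j k l, Integrable (F i j k l) ℙ) :
    ∫ ω, ∑ i ∈ s, ∑ j ∈ s, ∑ k ∈ s, ∑ l ∈ s, F i j k l ω
      = ∑ i ∈ s, ∑ j ∈ s, ∑ k ∈ s, ∑ l ∈ s, ∫ ω, F i j k l ω := by
  rw [integral_finset_sum s (fun i _ => integrable_finset_sum s (fun j _ =>
    integrable_finset_sum s (fun k _ => integrable_finset_sum s (fun l _ => h i j k l))))]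
  exact Finset.sum_congr rfl fun i _ => integral_sum3 s (F i) (h i)

end aux3

lemma ite_swap_zero {P Q : Prop} [Decidable P] [Decidable Q] (x : ℝ) :
    (if P then if Q then x else 0 else 0) = if Q then if P then x else 0 else 0 := by
  by_cases hP : P <;> by_cases hQ : Q <;> simp [hP, hQ]

lemma ite_and_nest {P Q R : Prop} [Decidable P] [Decidable Q] [Decidable R] (x : ℝ) :
    (if P ∧ Q ∧ R then x else 0) = if R then if Q then if P then x else 0 else 0 else 0 := by
  by_cases hP : P <;> by_cases hQ : Q <;> by_cases hR : R <;> simp [hP, hQ, hR]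

lemma delta_collapse {ι : Type*} [DecidableEq ι] [Fintype ι] (c : ι → ℝ) (X : ℝ) (t : ι) :
    ∑ l : ι, c l * (if t = l then X else 0) = c t * X := by
  simp [mul_ite, Finset.sum_ite_eq]

lemma sum_factor {ι : Type*} [Fintype ι] (c : ℝ) (f : ι → ℝ) :
    ∑ k : ι, c * f k = c * ∑ k : ι, f k := (Finset.mul_sum _ _ _).symm

/-- For a random vector `w` with i.i.d. entries of mean 0 and
moments `m₂, m₃, m₄`, and `σ(t) = ζ₂t² + ζ₁t + ζ₀`,
`E[σ(wᵀa)σ(wᵀb)]` equals the explicit polynomial expression in the moments. -/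
theorem quadratic_activation_kernel {p : ℕ} {Ω : Type*} [MeasureSpace Ω]
    [IsProbabilityMeasure (ℙ : Measure Ω)]
    (w : Fin p → Ω → ℝ)
    (hindep : iIndepFun w ℙ)
    (hident : ∀ i j : Fin p, Measure.map (w i) ℙ = Measure.map (w j) ℙ)
    (hL4 : ∀ i, MemLp (w i) 4 ℙ)
    (m₂ m₃ m₄ ζ₀ ζ₁ ζ₂ : ℝ)
    (h1 : ∀ i, ∫ ω, w i ω = 0)
    (h2 : ∀ i, ∫ ω, (w i ω) ^ 2 = m₂)
    (h3 : ∀ i, ∫ ω, (w i ω) ^ 3 = m₃)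
    (h4 : ∀ i, ∫ ω, (w i ω) ^ 4 = m₄)
    (a b : Fin p → ℝ) :
    ∫ ω, (ζ₂ * (∑ i, w i ω * a i) ^ 2 + ζ₁ * (∑ i, w i ω * a i) + ζ₀) *
          (ζ₂ * (∑ i, w i ω * b i) ^ 2 + ζ₁ * (∑ i, w i ω * b i) + ζ₀) =
      ζ₂ ^ 2 * (m₂ ^ 2 * (2 * (∑ i, a i * b i) ^ 2 + (∑ i, a i ^ 2) * (∑ i, b i ^ 2))
          + (m₄ - 3 * m₂ ^ 2) * (∑ i, a i ^ 2 * b i ^ 2))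
        + ζ₁ ^ 2 * m₂ * (∑ i, a i * b i)
        + ζ₂ * ζ₁ * m₃ * ((∑ i, a i ^ 2 * b i) + (∑ i, a i * b i ^ 2))
        + ζ₂ * ζ₀ * m₂ * ((∑ i, a i ^ 2) + (∑ i, b i ^ 2))
        + ζ₀ ^ 2 := by
  classical
  -- measurable modifications
  set W : Fin p → Ω → ℝ := fun i => (hL4 i).aestronglyMeasurable.mk (w i) with hWdef
  have hWm : ∀ i, Measurable (W i) := fun i =>
    (hL4 i).aestronglyMeasurable.stronglyMeasurable_mk.measurable
  have hWe : ∀ i, w i =ᵐ[ℙ] W i := fun i => (hL4 i).aestronglyMeasurable.ae_eq_mk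
  have hL4W : ∀ i, MemLp (W i) 4 ℙ := fun i => (hL4 i).ae_eq (hWe i)
  have hindepW : iIndepFun W ℙ := iIndepFun_ae_congr hindep hWe
  have hpow : ∀ (i : Fin p) (k : ℕ), (fun ω => (w i ω) ^ k) =ᵐ[ℙ] fun ω => (W i ω) ^ k :=
    fun i k => (hWe i).mono fun ω hω => by dsimp only; rw [hω]
  have h1W : ∀ i, ∫ ω, W i ω = 0 := fun i => (integral_congr_ae (hWe i)).symm.trans (h1 i)
  have h2W : ∀ i, ∫ ω, (W i ω) ^ 2 = m₂ :=
    fun i => (integral_congr_ae (hpow i 2)).symm.trans (h2 i)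
  have h3W : ∀ i, ∫ ω, (W i ω) ^ 3 = m₃ :=
    fun i => (integral_congr_ae (hpow i 3)).symm.trans (h3 i)
  have h4W : ∀ i, ∫ ω, (W i ω) ^ 4 = m₄ :=
    fun i => (integral_congr_ae (hpow i 4)).symm.trans (h4 i)
  -- replace w by W in the goal
  have hgoal : ∫ ω, (ζ₂ * (∑ i, w i ω * a i) ^ 2 + ζ₁ * (∑ i, w i ω * a i) + ζ₀) *
          (ζ₂ * (∑ i, w i ω * b i) ^ 2 + ζ₁ * (∑ i, w i ω * b i) + ζ₀)
      = ∫ ω, (ζ₂ * (∑ i, W i ω * a i) ^ 2 + ζ₁ * (∑ i, W i ω * a i) + ζ₀) *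
          (ζ₂ * (∑ i, W i ω * b i) ^ 2 + ζ₁ * (∑ i, W i ω * b i) + ζ₀) := by
    refine integral_congr_ae ?_
    filter_upwards [ae_all_iff.2 hWe] with ω hω
    simp only [hω]
  rw [hgoal]
  have hWint : ∀ i : Fin p, Integrable (W i) ℙ := fun i => (hL4W i).integrable (by norm_num)
  have mom_pair : ∀ (i j : Fin p), i ≠ j → ∀ (m n : ℕ), m ≤ 4 → n ≤ 4 →
      ∫ ω, W i ω ^ m * W j ω ^ n = (∫ ω, W i ω ^ m) * ∫ ω, W j ω ^ n := by
    intro i j hij m n hm hn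
    have hind : IndepFun (fun ω => W i ω ^ m) (fun ω => W j ω ^ n) ℙ :=
      (hindepW.indepFun hij).comp (measurable_id.pow_const m) (measurable_id.pow_const n)
    exact hind.integral_fun_mul_eq_mul_integral (integrable_pow_le (hL4W i) hm).aestronglyMeasurable
      (integrable_pow_le (hL4W j) hn).aestronglyMeasurable
  have mom_sq : ∀ (i j k : Fin p), i ≠ j → i ≠ k → j ≠ k →
      ∫ ω, W i ω ^ 2 * (W j ω * W k ω) = 0 := by
    intro i j k hij hik hjk
    have hvind : iIndepFun
        (fun t ω => W t ω ^ (if t = i then 2 else 1)) ℙ :=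
      hindepW.comp (fun t x => x ^ (if t = i then 2 else 1))
        (fun t => measurable_id.pow_const _)
    have hvi : ∀ t, Integrable (fun ω => W t ω ^ (if t = i then 2 else 1)) ℙ := fun t =>
      integrable_pow_le (hL4W t) (by by_cases h : t = i <;> simp [h])
    have hkey := (integral_finset_prod_eq hvind
      (fun t => (hWm t).pow_const _) hvi {i, j, k}).2
    have hii : i ∉ ({j, k} : Finset (Fin p)) := by simp [hij, hik]
    have hji : j ∉ ({k} : Finset (Fin p)) := by simp [hjk]
    simp only [Finset.prod_insert hii, Finset.prod_insert hji, Finset.prod_singleton] at hkey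
    simpa [Ne.symm hij, Ne.symm hik, h1W j] using hkey
  have mom_d3 : ∀ (i j k : Fin p), i ≠ j → i ≠ k → j ≠ k →
      ∫ ω, W i ω * (W j ω * W k ω) = 0 := by
    intro i j k hij hik hjk
    have hkey := (integral_finset_prod_eq hindepW hWm hWint {i, j, k}).2
    have hii : i ∉ ({j, k} : Finset (Fin p)) := by simp [hij, hik]
    have hji : j ∉ ({k} : Finset (Fin p)) := by simp [hjk]
    simp only [Finset.prod_insert hii, Finset.prod_insert hji, Finset.prod_singleton] at hkey
    simpa [h1W i] using hkey
  have mom_d4 : ∀ (i j k l : Fin p), i ≠ j → i ≠ k → i ≠ l → j ≠ k → j ≠ l → k ≠ l →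
      ∫ ω, W i ω * (W j ω * (W k ω * W l ω)) = 0 := by
    intro i j k l hij hik hil hjk hjl hkl
    have hkey := (integral_finset_prod_eq hindepW hWm hWint {i, j, k, l}).2
    have hii : i ∉ ({j, k, l} : Finset (Fin p)) := by simp [hij, hik, hil]
    have hji : j ∉ ({k, l} : Finset (Fin p)) := by simp [hjk, hjl]
    have hki : k ∉ ({l} : Finset (Fin p)) := by simp [hkl]
    simp only [Finset.prod_insert hii, Finset.prod_insert hji, Finset.prod_insert hki,
      Finset.prod_singleton] at hkey
    simpa [h1W i] using hkey
  have eint : ∀ f g : Ω → ℝ, (∀ ω, f ω = g ω) → ∫ ω, f ω = ∫ ω, g ω := fun f g h =>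
    integral_congr_ae (Filter.Eventually.of_forall h)
  have mom2 : ∀ i j : Fin p, ∫ ω, W i ω * W j ω = if i = j then m₂ else 0 := by
    intro i j
    by_cases h : i = j
    · subst h
      rw [if_pos rfl, eint _ (fun ω => W i ω ^ 2) (fun ω => by ring), h2W]
    · rw [if_neg h]
      have hmp := mom_pair i j h 1 1 (by norm_num) (by norm_num)
      simp only [pow_one] at hmp
      rw [hmp, h1W, zero_mul]
  have mom3f : ∀ i j k : Fin p, ∫ ω, W i ω * (W j ω * W k ω)
      = if i = j ∧ j = k then m₃ else 0 := by
    intro i j k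
    by_cases hij : i = j
    · subst hij
      by_cases hik : i = k
      · subst hik
        rw [if_pos ⟨rfl, rfl⟩, eint _ (fun ω => W i ω ^ 3) (fun ω => by ring), h3W]
      · rw [if_neg (by tauto), eint _ (fun ω => W i ω ^ 2 * W k ω ^ 1) (fun ω => by ring),
          mom_pair i k hik 2 1 (by norm_num) (by norm_num)]
        simp [h1W k]
    · by_cases hik : i = k
      · subst hik
        rw [if_neg (by tauto), eint _ (fun ω => W i ω ^ 2 * W j ω ^ 1) (fun ω => by ring),
          mom_pair i j hij 2 1 (by norm_num) (by norm_num)]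
        simp [h1W j]
      · by_cases hjk : j = k
        · subst hjk
          rw [if_neg (by tauto), eint _ (fun ω => W j ω ^ 2 * W i ω ^ 1) (fun ω => by ring),
            mom_pair j i (Ne.symm hij) 2 1 (by norm_num) (by norm_num)]
          simp [h1W i]
        · rw [if_neg (by tauto)]
          exact mom_d3 i j k hij hik hjk
  have mom4f : ∀ i j k l : Fin p, ∫ ω, W i ω * (W j ω * (W k ω * W l ω))
      = (if i = j then (if k = l then m₂ ^ 2 else 0) else 0)
        + (if i = k then (if j = l then m₂ ^ 2 else 0) else 0)
        + (if i = l then (if j = k then m₂ ^ 2 else 0) else 0)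
        + (if i = j ∧ i = k ∧ i = l then m₄ - 3 * m₂ ^ 2 else 0) := by
    intro i j k l
    by_cases hij : i = j
    · subst hij
      by_cases hkl : k = l
      · subst hkl
        by_cases hik : i = k
        · subst hik
          rw [eint _ (fun ω => W i ω ^ 4) (fun ω => by ring), h4W]
          simp
          ring
        · rw [eint _ (fun ω => W i ω ^ 2 * W k ω ^ 2) (fun ω => by ring),
            mom_pair i k hik 2 2 (by norm_num) (by norm_num), h2W, h2W]
          simp [hik]
          ring
      · by_cases hik : i = k
        · subst hik
          rw [eint _ (fun ω => W i ω ^ 3 * W l ω ^ 1) (fun ω => by ring),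
            mom_pair i l hkl 3 1 (by norm_num) (by norm_num)]
          simp [hkl, h1W l]
        · by_cases hil : i = l
          · subst hil
            rw [eint _ (fun ω => W i ω ^ 3 * W k ω ^ 1) (fun ω => by ring),
              mom_pair i k hik 3 1 (by norm_num) (by norm_num)]
            simp [hik, hkl, h1W k]
          · rw [eint _ (fun ω => W i ω ^ 2 * (W k ω * W l ω)) (fun ω => by ring),
              mom_sq i k l hik hil hkl]
            simp [hkl, hik, hil]
    · by_cases hkl : k = l
      · subst hkl
        by_cases hik : i = k
        · subst hik
          rw [eint _ (fun ω => W i ω ^ 3 * W j ω ^ 1) (fun ω => by ring),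
            mom_pair i j hij 3 1 (by norm_num) (by norm_num)]
          simp [hij, Ne.symm hij, h1W j]
        · by_cases hjk : j = k
          · subst hjk
            rw [eint _ (fun ω => W j ω ^ 3 * W i ω ^ 1) (fun ω => by ring),
              mom_pair j i (Ne.symm hij) 3 1 (by norm_num) (by norm_num)]
            simp [hij, hik, h1W i]
          · rw [eint _ (fun ω => W k ω ^ 2 * (W i ω * W j ω)) (fun ω => by ring),
              mom_sq k i j (Ne.symm hik) (Ne.symm hjk) hij]
            simp [hij, hik, hjk]
      · by_cases hik : i = k
        · subst hik
          by_cases hjl : j = l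
          · subst hjl
            rw [eint _ (fun ω => W i ω ^ 2 * W j ω ^ 2) (fun ω => by ring),
              mom_pair i j hij 2 2 (by norm_num) (by norm_num), h2W, h2W]
            simp [hij, hkl]
            ring
          · have hil : i ≠ l := hkl
            rw [eint _ (fun ω => W i ω ^ 2 * (W j ω * W l ω)) (fun ω => by ring),
              mom_sq i j l hij hil hjl]
            simp [hij, hil, hjl]
        · by_cases hil : i = l
          · subst hil
            by_cases hjk : j = k
            · subst hjk
              rw [eint _ (fun ω => W i ω ^ 2 * W j ω ^ 2) (fun ω => by ring),
                mom_pair i j hij 2 2 (by norm_num) (by norm_num), h2W, h2W]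
              simp [hij, hik]
              ring
            · rw [eint _ (fun ω => W i ω ^ 2 * (W j ω * W k ω)) (fun ω => by ring),
                mom_sq i j k hij hik hjk]
              simp [hij, hik, hjk]
          · by_cases hjk : j = k
            · subst hjk
              have hjl : j ≠ l := hkl
              rw [eint _ (fun ω => W j ω ^ 2 * (W i ω * W l ω)) (fun ω => by ring),
                mom_sq j i l (Ne.symm hij) hjl hil]
              simp [hij, hik, hil]
            · by_cases hjl : j = l
              · subst hjl
                rw [eint _ (fun ω => W j ω ^ 2 * (W i ω * W k ω)) (fun ω => by ring),
                  mom_sq j i k (Ne.symm hij) hjk hik]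
                simp [hij, hik, hil, hjk]
              · rw [mom_d4 i j k l hij hik hil hjk hjl hkl]
                simp [hij, hik, hil, hjk]
  have int3R : ∀ i j k : Fin p, Integrable (fun ω => W i ω * (W j ω * W k ω)) ℙ :=
    fun i j k => (integrable_mul3 (hL4W i) (hL4W j) (hL4W k)).congr
      (by filter_upwards with ω; ring)
  have int4R : ∀ i j k l : Fin p, Integrable (fun ω => W i ω * (W j ω * (W k ω * W l ω))) ℙ :=
    fun i j k l => (integrable_mul4 (hL4W i) (hL4W j) (hL4W k) (hL4W l)).congr
      (by filter_upwards with ω; ring)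
  have key1 : ∀ u : Fin p → ℝ, ∫ ω, (∑ i, W i ω * u i) = 0 := by
    intro u
    rw [integral_finset_sum _ (fun i _ => (hWint i).mul_const (u i))]
    simp [integral_mul_const, h1W]
  have key2 : ∀ u v : Fin p → ℝ, ∫ ω, (∑ i, W i ω * u i) * (∑ i, W i ω * v i)
      = m₂ * ∑ i, u i * v i := by
    intro u v
    have hexp : ∀ ω : Ω, (∑ i, W i ω * u i) * (∑ i, W i ω * v i)
        = ∑ i, ∑ j, (u i * v j) * (W i ω * W j ω) := by
      intro ω
      rw [Finset.sum_mul_sum]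
      exact Finset.sum_congr rfl fun i _ => Finset.sum_congr rfl fun j _ => by ring
    rw [eint _ _ hexp, integral_sum2 _ _
      (fun i j => (integrable_mul2 (hL4W i) (hL4W j)).const_mul _)]
    have hval : ∀ i j : Fin p, ∫ ω, (u i * v j) * (W i ω * W j ω)
        = (u i * v j) * (if i = j then m₂ else 0) := fun i j => by
      rw [integral_const_mul, mom2]
    simp_rw [hval]
    simp only [mul_ite, mul_zero, Finset.sum_ite_eq, Finset.mem_univ, if_true]
    rw [Finset.mul_sum]
    exact Finset.sum_congr rfl fun i _ => by ring
  have key3 : ∀ u v : Fin p → ℝ, ∫ ω, (∑ i, W i ω * u i) ^ 2 * (∑ i, W i ω * v i)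
      = m₃ * ∑ i, u i ^ 2 * v i := by
    intro u v
    have hexp : ∀ ω : Ω, (∑ i, W i ω * u i) ^ 2 * (∑ i, W i ω * v i)
        = ∑ i, ∑ j, ∑ k, (u i * u j * v k) * (W i ω * (W j ω * W k ω)) := by
      intro ω
      rw [sq, Finset.sum_mul_sum, Finset.sum_mul]
      refine Finset.sum_congr rfl fun i _ => ?_
      rw [Finset.sum_mul]
      refine Finset.sum_congr rfl fun j _ => ?_
      rw [Finset.mul_sum]
      exact Finset.sum_congr rfl fun k _ => by ring
    rw [eint _ _ hexp, integral_sum3 Finset.univ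
      (fun i j k ω => (u i * u j * v k) * (W i ω * (W j ω * W k ω)))
      (fun i j k => (int3R i j k).const_mul _)]
    have hval : ∀ i j k : Fin p, ∫ ω, (u i * u j * v k) * (W i ω * (W j ω * W k ω))
        = (u i * u j * v k) * (if j = k then if i = j then m₃ else 0 else 0) := fun i j k => by
      rw [integral_const_mul, mom3f]
      congr 1
      by_cases h1 : i = j <;> by_cases h2 : j = k <;> simp [h1, h2]
    simp_rw [hval]
    calc ∑ i, ∑ j, ∑ k, (u i * u j * v k) * (if j = k then if i = j then m₃ else 0 else 0)
        = ∑ i, ∑ j, (u i * u j * v j) * (if i = j then m₃ else 0) :=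
          Finset.sum_congr rfl fun i _ => Finset.sum_congr rfl fun j _ =>
            delta_collapse (fun k => u i * u j * v k) _ j
      _ = ∑ i, (u i * u i * v i) * m₃ :=
          Finset.sum_congr rfl fun i _ =>
            delta_collapse (fun j => u i * u j * v j) _ i
      _ = m₃ * ∑ i, u i ^ 2 * v i := by
          rw [Finset.mul_sum]
          exact Finset.sum_congr rfl fun i _ => by ring
  have key4 : ∀ u v : Fin p → ℝ, ∫ ω, (∑ i, W i ω * u i) ^ 2 * (∑ i, W i ω * v i) ^ 2
      = m₂ ^ 2 * ((∑ i, u i ^ 2) * (∑ i, v i ^ 2) + 2 * (∑ i, u i * v i) ^ 2)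
        + (m₄ - 3 * m₂ ^ 2) * ∑ i, u i ^ 2 * v i ^ 2 := by
    intro u v
    have hexp : ∀ ω : Ω, (∑ i, W i ω * u i) ^ 2 * (∑ i, W i ω * v i) ^ 2
        = ∑ i, ∑ j, ∑ k, ∑ l, (u i * u j * (v k * v l))
            * (W i ω * (W j ω * (W k ω * W l ω))) := by
      intro ω
      rw [sq, sq, Finset.sum_mul_sum, Finset.sum_mul_sum, Finset.sum_mul]
      refine Finset.sum_congr rfl fun i _ => ?_
      rw [Finset.sum_mul]
      refine Finset.sum_congr rfl fun j _ => ?_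
      rw [Finset.mul_sum]
      refine Finset.sum_congr rfl fun k _ => ?_
      rw [Finset.mul_sum]
      exact Finset.sum_congr rfl fun l _ => by ring
    rw [eint _ _ hexp, integral_sum4 Finset.univ
      (fun i j k l ω => (u i * u j * (v k * v l)) * (W i ω * (W j ω * (W k ω * W l ω))))
      (fun i j k l => (int4R i j k l).const_mul _)]
    have hval : ∀ i j k l : Fin p, ∫ ω, (u i * u j * (v k * v l))
          * (W i ω * (W j ω * (W k ω * W l ω)))
        = (u i * u j * (v k * v l)) * ((if k = l then (if i = j then m₂ ^ 2 else 0) else 0)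
            + (if j = l then (if i = k then m₂ ^ 2 else 0) else 0)
            + (if i = l then (if j = k then m₂ ^ 2 else 0) else 0)
            + (if i = l then if i = k then if i = j then m₄ - 3 * m₂ ^ 2 else 0 else 0
                else 0)) := fun i j k l => by
      rw [integral_const_mul, mom4f, ite_swap_zero (P := i = j) (Q := k = l),
        ite_swap_zero (P := i = k) (Q := j = l), ite_and_nest]
    simp_rw [hval]
    simp only [mul_add, Finset.sum_add_distrib]
    have hS1 : ∑ i, ∑ j, ∑ k, ∑ l : Fin p, (u i * u j * (v k * v l)) *
        (if k = l then if i = j then m₂ ^ 2 else 0 else 0)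
        = (∑ i, u i ^ 2) * (∑ i, v i ^ 2) * m₂ ^ 2 := by
      calc ∑ i, ∑ j, ∑ k, ∑ l : Fin p, (u i * u j * (v k * v l)) *
            (if k = l then if i = j then m₂ ^ 2 else 0 else 0)
          = ∑ i, ∑ j, ∑ k : Fin p, (u i * u j * (v k * v k)) * (if i = j then m₂ ^ 2 else 0) :=
            Finset.sum_congr rfl fun i _ => Finset.sum_congr rfl fun j _ =>
              Finset.sum_congr rfl fun k _ =>
                delta_collapse (fun l => u i * u j * (v k * v l)) _ k
        _ = ∑ i, ∑ j : Fin p, (u i * u j * (if i = j then m₂ ^ 2 else 0)) * ∑ k, v k ^ 2 := by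
            refine Finset.sum_congr rfl fun i _ => Finset.sum_congr rfl fun j _ => ?_
            rw [Finset.mul_sum]
            exact Finset.sum_congr rfl fun k _ => by ring
        _ = ∑ i, ∑ j : Fin p, (u i * u j * (∑ k, v k ^ 2)) * (if i = j then m₂ ^ 2 else 0) :=
            Finset.sum_congr rfl fun i _ => Finset.sum_congr rfl fun j _ => by ring
        _ = ∑ i : Fin p, (u i * u i * (∑ k, v k ^ 2)) * m₂ ^ 2 :=
            Finset.sum_congr rfl fun i _ =>
              delta_collapse (fun j => u i * u j * (∑ k, v k ^ 2)) _ i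
        _ = (∑ i, u i ^ 2) * (∑ i, v i ^ 2) * m₂ ^ 2 := by
            rw [Finset.sum_mul, Finset.sum_mul]
            exact Finset.sum_congr rfl fun i _ => by ring
    have hS2 : ∑ i, ∑ j, ∑ k, ∑ l : Fin p, (u i * u j * (v k * v l)) *
        (if j = l then if i = k then m₂ ^ 2 else 0 else 0)
        = (∑ i, u i * v i) ^ 2 * m₂ ^ 2 := by
      calc ∑ i, ∑ j, ∑ k, ∑ l : Fin p, (u i * u j * (v k * v l)) *
            (if j = l then if i = k then m₂ ^ 2 else 0 else 0)
          = ∑ i, ∑ j, ∑ k : Fin p, (u i * u j * (v k * v j)) * (if i = k then m₂ ^ 2 else 0) :=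
            Finset.sum_congr rfl fun i _ => Finset.sum_congr rfl fun j _ =>
              Finset.sum_congr rfl fun k _ =>
                delta_collapse (fun l => u i * u j * (v k * v l)) _ j
        _ = ∑ i, ∑ j : Fin p, (u i * u j * (v i * v j)) * m₂ ^ 2 :=
            Finset.sum_congr rfl fun i _ => Finset.sum_congr rfl fun j _ =>
              delta_collapse (fun k => u i * u j * (v k * v j)) _ i
        _ = (∑ i, u i * v i) ^ 2 * m₂ ^ 2 := by
            conv_rhs => rw [sq, Finset.sum_mul_sum, Finset.sum_mul]
            refine Finset.sum_congr rfl fun i _ => ?_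
            rw [Finset.sum_mul]
            exact Finset.sum_congr rfl fun j _ => by ring
    have hS3 : ∑ i, ∑ j, ∑ k, ∑ l : Fin p, (u i * u j * (v k * v l)) *
        (if i = l then if j = k then m₂ ^ 2 else 0 else 0)
        = (∑ i, u i * v i) ^ 2 * m₂ ^ 2 := by
      calc ∑ i, ∑ j, ∑ k, ∑ l : Fin p, (u i * u j * (v k * v l)) *
            (if i = l then if j = k then m₂ ^ 2 else 0 else 0)
          = ∑ i, ∑ j, ∑ k : Fin p, (u i * u j * (v k * v i)) * (if j = k then m₂ ^ 2 else 0) :=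
            Finset.sum_congr rfl fun i _ => Finset.sum_congr rfl fun j _ =>
              Finset.sum_congr rfl fun k _ =>
                delta_collapse (fun l => u i * u j * (v k * v l)) _ i
        _ = ∑ i, ∑ j : Fin p, (u i * u j * (v j * v i)) * m₂ ^ 2 :=
            Finset.sum_congr rfl fun i _ => Finset.sum_congr rfl fun j _ =>
              delta_collapse (fun k => u i * u j * (v k * v i)) _ j
        _ = (∑ i, u i * v i) ^ 2 * m₂ ^ 2 := by
            conv_rhs => rw [sq, Finset.sum_mul_sum, Finset.sum_mul]
            refine Finset.sum_congr rfl fun i _ => ?_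
            rw [Finset.sum_mul]
            exact Finset.sum_congr rfl fun j _ => by ring
    have hS4 : ∑ i, ∑ j, ∑ k, ∑ l : Fin p, (u i * u j * (v k * v l)) *
        (if i = l then if i = k then if i = j then m₄ - 3 * m₂ ^ 2 else 0 else 0 else 0)
        = (∑ i, u i ^ 2 * v i ^ 2) * (m₄ - 3 * m₂ ^ 2) := by
      calc ∑ i, ∑ j, ∑ k, ∑ l : Fin p, (u i * u j * (v k * v l)) *
            (if i = l then if i = k then if i = j then m₄ - 3 * m₂ ^ 2 else 0 else 0 else 0)
          = ∑ i, ∑ j, ∑ k : Fin p, (u i * u j * (v k * v i)) *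
              (if i = k then if i = j then m₄ - 3 * m₂ ^ 2 else 0 else 0) :=
            Finset.sum_congr rfl fun i _ => Finset.sum_congr rfl fun j _ =>
              Finset.sum_congr rfl fun k _ =>
                delta_collapse (fun l => u i * u j * (v k * v l)) _ i
        _ = ∑ i, ∑ j : Fin p, (u i * u j * (v i * v i)) *
              (if i = j then m₄ - 3 * m₂ ^ 2 else 0) :=
            Finset.sum_congr rfl fun i _ => Finset.sum_congr rfl fun j _ =>
              delta_collapse (fun k => u i * u j * (v k * v i)) _ i
        _ = ∑ i : Fin p, (u i * u i * (v i * v i)) * (m₄ - 3 * m₂ ^ 2) :=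
            Finset.sum_congr rfl fun i _ =>
              delta_collapse (fun j => u i * u j * (v i * v i)) _ i
        _ = (∑ i, u i ^ 2 * v i ^ 2) * (m₄ - 3 * m₂ ^ 2) := by
            rw [Finset.sum_mul]
            exact Finset.sum_congr rfl fun i _ => by ring
    rw [hS1, hS2, hS3, hS4]
    ring
  -- integrability of the building blocks
  have hSa4 : MemLp (fun ω => ∑ i, W i ω * a i) 4 ℙ := by
    refine (memLp_finsetSum' Finset.univ (fun i _ => (hL4W i).const_mul (a i))).ae_eq ?_
    filter_upwards with ω
    simp [mul_comm]
  have hSb4 : MemLp (fun ω => ∑ i, W i ω * b i) 4 ℙ := by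
    refine (memLp_finsetSum' Finset.univ (fun i _ => (hL4W i).const_mul (b i))).ae_eq ?_
    filter_upwards with ω
    simp [mul_comm]
  have iT1 : Integrable (fun ω => ζ₂ ^ 2 * ((∑ i, W i ω * a i) ^ 2 * (∑ i, W i ω * b i) ^ 2)) ℙ :=
    ((integrable_mul4 hSa4 hSa4 hSb4 hSb4).congr
      (by filter_upwards with ω; ring)).const_mul _
  have iT2 : Integrable (fun ω => ζ₂ * ζ₁ * ((∑ i, W i ω * a i) ^ 2 * (∑ i, W i ω * b i))) ℙ :=
    ((integrable_mul3 hSa4 hSa4 hSb4).congr (by filter_upwards with ω; ring)).const_mul _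
  have iT3 : Integrable (fun ω => ζ₂ * ζ₁ * ((∑ i, W i ω * b i) ^ 2 * (∑ i, W i ω * a i))) ℙ :=
    ((integrable_mul3 hSb4 hSb4 hSa4).congr (by filter_upwards with ω; ring)).const_mul _
  have iT4 : Integrable (fun ω => ζ₁ ^ 2 * ((∑ i, W i ω * a i) * (∑ i, W i ω * b i))) ℙ :=
    (integrable_mul2 hSa4 hSb4).const_mul _
  have iT5 : Integrable (fun ω => ζ₂ * ζ₀ * (∑ i, W i ω * a i) ^ 2) ℙ :=
    (integrable_pow_le hSa4 (by norm_num : (2:ℕ) ≤ 4)).const_mul _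
  have iT6 : Integrable (fun ω => ζ₂ * ζ₀ * (∑ i, W i ω * b i) ^ 2) ℙ :=
    (integrable_pow_le hSb4 (by norm_num : (2:ℕ) ≤ 4)).const_mul _
  have iT7 : Integrable (fun ω => ζ₁ * ζ₀ * (∑ i, W i ω * a i)) ℙ :=
    (hSa4.integrable (by norm_num)).const_mul _
  have iT8 : Integrable (fun ω => ζ₁ * ζ₀ * (∑ i, W i ω * b i)) ℙ :=
    (hSb4.integrable (by norm_num)).const_mul _
  have iT9 : Integrable (fun _ : Ω => ζ₀ ^ 2) ℙ := integrable_const _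
  -- expand the integrand
  have hexpand : ∀ ω : Ω,
      (ζ₂ * (∑ i, W i ω * a i) ^ 2 + ζ₁ * (∑ i, W i ω * a i) + ζ₀) *
        (ζ₂ * (∑ i, W i ω * b i) ^ 2 + ζ₁ * (∑ i, W i ω * b i) + ζ₀)
      = ζ₂ ^ 2 * ((∑ i, W i ω * a i) ^ 2 * (∑ i, W i ω * b i) ^ 2)
        + (ζ₂ * ζ₁ * ((∑ i, W i ω * a i) ^ 2 * (∑ i, W i ω * b i))
        + (ζ₂ * ζ₁ * ((∑ i, W i ω * b i) ^ 2 * (∑ i, W i ω * a i))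
        + (ζ₁ ^ 2 * ((∑ i, W i ω * a i) * (∑ i, W i ω * b i))
        + (ζ₂ * ζ₀ * (∑ i, W i ω * a i) ^ 2
        + (ζ₂ * ζ₀ * (∑ i, W i ω * b i) ^ 2
        + (ζ₁ * ζ₀ * (∑ i, W i ω * a i)
        + (ζ₁ * ζ₀ * (∑ i, W i ω * b i)
        + ζ₀ ^ 2))))))) := fun ω => by ring
  rw [eint _ _ hexpand]
  have iRest1 : Integrable (fun ω => (ζ₂ * ζ₁ * ((∑ i, W i ω * a i) ^ 2 * (∑ i, W i ω * b i)) + (ζ₂ * ζ₁ * ((∑ i, W i ω * b i) ^ 2 * (∑ i, W i ω * a i)) + (ζ₁ ^ 2 * ((∑ i, W i ω * a i) * (∑ i, W i ω * b i)) + (ζ₂ * ζ₀ * (∑ i, W i ω * a i) ^ 2 + (ζ₂ * ζ₀ * (∑ i, W i ω * b i) ^ 2 + (ζ₁ * ζ₀ * (∑ i, W i ω * a i) + (ζ₁ * ζ₀ * (∑ i, W i ω * b i) + ζ₀ ^ 2)))))))) ℙ := iT2.add (iT3.add (iT4.add (iT5.add (iT6.add (iT7.add (iT8.add iT9))))))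
  have hsplit1 : ∫ ω, (ζ₂ ^ 2 * ((∑ i, W i ω * a i) ^ 2 * (∑ i, W i ω * b i) ^ 2) + (ζ₂ * ζ₁ * ((∑ i, W i ω * a i) ^ 2 * (∑ i, W i ω * b i)) + (ζ₂ * ζ₁ * ((∑ i, W i ω * b i) ^ 2 * (∑ i, W i ω * a i)) + (ζ₁ ^ 2 * ((∑ i, W i ω * a i) * (∑ i, W i ω * b i)) + (ζ₂ * ζ₀ * (∑ i, W i ω * a i) ^ 2 + (ζ₂ * ζ₀ * (∑ i, W i ω * b i) ^ 2 + (ζ₁ * ζ₀ * (∑ i, W i ω * a i) + (ζ₁ * ζ₀ * (∑ i, W i ω * b i) + ζ₀ ^ 2)))))))) = (∫ ω, ζ₂ ^ 2 * ((∑ i, W i ω * a i) ^ 2 * (∑ i, W i ω * b i) ^ 2)) + ∫ ω, (ζ₂ * ζ₁ * ((∑ i, W i ω * a i) ^ 2 * (∑ i, W i ω * b i)) + (ζ₂ * ζ₁ * ((∑ i, W i ω * b i) ^ 2 * (∑ i, W i ω * a i)) + (ζ₁ ^ 2 * ((∑ i, W i ω * a i) * (∑ i, W i ω * b i)) + (ζ₂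 * ζ₀ * (∑ i, W i ω * a i) ^ 2 + (ζ₂ * ζ₀ * (∑ i, W i ω * b i) ^ 2 + (ζ₁ * ζ₀ * (∑ i, W i ω * a i) + (ζ₁ * ζ₀ * (∑ i, W i ω * b i) + ζ₀ ^ 2))))))) :=
    integral_add iT1 iRest1
  have iRest2 : Integrable (fun ω => (ζ₂ * ζ₁ * ((∑ i, W i ω * b i) ^ 2 * (∑ i, W i ω * a i)) + (ζ₁ ^ 2 * ((∑ i, W i ω * a i) * (∑ i, W i ω * b i)) + (ζ₂ * ζ₀ * (∑ i, W i ω * a i) ^ 2 + (ζ₂ * ζ₀ * (∑ i, W i ω * b i) ^ 2 + (ζ₁ * ζ₀ * (∑ i, W i ω * a i) + (ζ₁ * ζ₀ * (∑ i, W i ω * b i) + ζ₀ ^ 2))))))) ℙ := iT3.add (iT4.add (iT5.add (iT6.add (iT7.add (iT8.add iT9)))))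
  have hsplit2 : ∫ ω, (ζ₂ * ζ₁ * ((∑ i, W i ω * a i) ^ 2 * (∑ i, W i ω * b i)) + (ζ₂ * ζ₁ * ((∑ i, W i ω * b i) ^ 2 * (∑ i, W i ω * a i)) + (ζ₁ ^ 2 * ((∑ i, W i ω * a i) * (∑ i, W i ω * b i)) + (ζ₂ * ζ₀ * (∑ i, W i ω * a i) ^ 2 + (ζ₂ * ζ₀ * (∑ i, W i ω * b i) ^ 2 + (ζ₁ * ζ₀ * (∑ i, W i ω * a i) + (ζ₁ * ζ₀ * (∑ i, W i ω * b i) + ζ₀ ^ 2))))))) = (∫ ω, ζ₂ * ζ₁ * ((∑ i, W i ω * a i) ^ 2 * (∑ i, W i ω * b i))) + ∫ ω, (ζ₂ * ζ₁ * ((∑ i, W i ω * b i) ^ 2 * (∑ i, W i ω * a i)) + (ζ₁ ^ 2 * ((∑ i, W i ω * a i) * (∑ i, W i ω * b i)) + (ζ₂ * ζ₀ * (∑ i, W i ω * a i) ^ 2 + (ζ₂ * ζ₀ * (∑ i, W i ω * b i) ^ 2 + (ζ₁ * ζ₀ * (∑ i, W i ω * a i) + (ζ₁ * ζ₀ * (∑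 i, W i ω * b i) + ζ₀ ^ 2)))))) :=
    integral_add iT2 iRest2
  have iRest3 : Integrable (fun ω => (ζ₁ ^ 2 * ((∑ i, W i ω * a i) * (∑ i, W i ω * b i)) + (ζ₂ * ζ₀ * (∑ i, W i ω * a i) ^ 2 + (ζ₂ * ζ₀ * (∑ i, W i ω * b i) ^ 2 + (ζ₁ * ζ₀ * (∑ i, W i ω * a i) + (ζ₁ * ζ₀ * (∑ i, W i ω * b i) + ζ₀ ^ 2)))))) ℙ := iT4.add (iT5.add (iT6.add (iT7.add (iT8.add iT9))))
  have hsplit3 : ∫ ω, (ζ₂ * ζ₁ * ((∑ i, W i ω * b i) ^ 2 * (∑ i, W i ω * a i)) + (ζ₁ ^ 2 * ((∑ i, W i ω * a i) * (∑ i, W i ω * b i)) + (ζ₂ * ζ₀ * (∑ i, W i ω * a i) ^ 2 + (ζ₂ * ζ₀ * (∑ i, W i ω * b i) ^ 2 + (ζ₁ * ζ₀ * (∑ i, W i ω * a i) + (ζ₁ * ζ₀ * (∑ i, W i ω * b i) + ζ₀ ^ 2)))))) = (∫ ω, ζ₂ * ζ₁ * ((∑ i, W i ω * b i) ^ 2 *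 (∑ i, W i ω * a i))) + ∫ ω, (ζ₁ ^ 2 * ((∑ i, W i ω * a i) * (∑ i, W i ω * b i)) + (ζ₂ * ζ₀ * (∑ i, W i ω * a i) ^ 2 + (ζ₂ * ζ₀ * (∑ i, W i ω * b i) ^ 2 + (ζ₁ * ζ₀ * (∑ i, W i ω * a i) + (ζ₁ * ζ₀ * (∑ i, W i ω * b i) + ζ₀ ^ 2))))) :=
    integral_add iT3 iRest3
  have iRest4 : Integrable (fun ω => (ζ₂ * ζ₀ * (∑ i, W i ω * a i) ^ 2 + (ζ₂ * ζ₀ * (∑ i, W i ω * b i) ^ 2 + (ζ₁ * ζ₀ * (∑ i, W i ω * a i) + (ζ₁ * ζ₀ * (∑ i, W i ω * b i) + ζ₀ ^ 2))))) ℙ := iT5.add (iT6.add (iT7.add (iT8.add iT9)))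
  have hsplit4 : ∫ ω, (ζ₁ ^ 2 * ((∑ i, W i ω * a i) * (∑ i, W i ω * b i)) + (ζ₂ * ζ₀ * (∑ i, W i ω * a i) ^ 2 + (ζ₂ * ζ₀ * (∑ i, W i ω * b i) ^ 2 + (ζ₁ * ζ₀ * (∑ i, W i ω * a i) + (ζ₁ * ζ₀ * (∑ i, W i ω * b i) + ζ₀ ^ 2))))) = (∫ ω, ζ₁ ^ 2 * ((∑ i, W i ω * a i) * (∑ i, W i ω * b i))) + ∫ ω, (ζ₂ * ζ₀ * (∑ i, W i ω * a i) ^ 2 + (ζ₂ * ζ₀ * (∑ i, W i ω * b i) ^ 2 + (ζ₁ * ζ₀ * (∑ i, W i ω * a i) + (ζ₁ * ζ₀ * (∑ i, W i ω * b i) + ζ₀ ^ 2)))) :=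
    integral_add iT4 iRest4
  have iRest5 : Integrable (fun ω => (ζ₂ * ζ₀ * (∑ i, W i ω * b i) ^ 2 + (ζ₁ * ζ₀ * (∑ i, W i ω * a i) + (ζ₁ * ζ₀ * (∑ i, W i ω * b i) + ζ₀ ^ 2)))) ℙ := iT6.add (iT7.add (iT8.add iT9))
  have hsplit5 : ∫ ω, (ζ₂ * ζ₀ * (∑ i, W i ω * a i) ^ 2 + (ζ₂ * ζ₀ * (∑ i, W i ω * b i) ^ 2 + (ζ₁ * ζ₀ * (∑ i, W i ω * a i) + (ζ₁ * ζ₀ * (∑ i, W i ω * b i) + ζ₀ ^ 2)))) = (∫ ω, ζ₂ * ζ₀ * (∑ i, W i ω * a i) ^ 2) + ∫ ω, (ζ₂ * ζ₀ * (∑ i, W i ω * b i) ^ 2 + (ζ₁ * ζ₀ * (∑ i, W i ω * a i) + (ζ₁ * ζ₀ * (∑ i, W i ω * b i) + ζ₀ ^ 2))) :=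
    integral_add iT5 iRest5
  have iRest6 : Integrable (fun ω => (ζ₁ * ζ₀ * (∑ i, W i ω * a i) + (ζ₁ * ζ₀ * (∑ i, W i ω * b i) + ζ₀ ^ 2))) ℙ := iT7.add (iT8.add iT9)
  have hsplit6 : ∫ ω, (ζ₂ * ζ₀ * (∑ i, W i ω * b i) ^ 2 + (ζ₁ * ζ₀ * (∑ i, W i ω * a i) + (ζ₁ * ζ₀ * (∑ i, W i ω * b i) + ζ₀ ^ 2))) = (∫ ω, ζ₂ * ζ₀ * (∑ i, W i ω * b i) ^ 2) + ∫ ω, (ζ₁ * ζ₀ * (∑ i, W i ω * a i) + (ζ₁ * ζ₀ * (∑ i, W i ω * b i) + ζ₀ ^ 2)) :=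
    integral_add iT6 iRest6
  have iRest7 : Integrable (fun ω => (ζ₁ * ζ₀ * (∑ i, W i ω * b i) + ζ₀ ^ 2)) ℙ := iT8.add iT9
  have hsplit7 : ∫ ω, (ζ₁ * ζ₀ * (∑ i, W i ω * a i) + (ζ₁ * ζ₀ * (∑ i, W i ω * b i) + ζ₀ ^ 2)) = (∫ ω, ζ₁ * ζ₀ * (∑ i, W i ω * a i)) + ∫ ω, (ζ₁ * ζ₀ * (∑ i, W i ω * b i) + ζ₀ ^ 2) :=
    integral_add iT7 iRest7
  have iRest8 : Integrable (fun ω => ζ₀ ^ 2) ℙ := iT9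
  have hsplit8 : ∫ ω, (ζ₁ * ζ₀ * (∑ i, W i ω * b i) + ζ₀ ^ 2) = (∫ ω, ζ₁ * ζ₀ * (∑ i, W i ω * b i)) + ∫ ω, ζ₀ ^ 2 :=
    integral_add iT8 iRest8
  rw [hsplit1, hsplit2, hsplit3, hsplit4, hsplit5, hsplit6, hsplit7, hsplit8]
  simp only [integral_const_mul]
  have key2a : ∫ ω, (∑ i, W i ω * a i) ^ 2 = m₂ * ∑ i, a i * a i := by
    rw [eint (fun ω => (∑ i, W i ω * a i) ^ 2)
      (fun ω => (∑ i, W i ω * a i) * (∑ i, W i ω * a i)) (fun ω => by ring)]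
    exact key2 a a
  have key2b : ∫ ω, (∑ i, W i ω * b i) ^ 2 = m₂ * ∑ i, b i * b i := by
    rw [eint (fun ω => (∑ i, W i ω * b i) ^ 2)
      (fun ω => (∑ i, W i ω * b i) * (∑ i, W i ω * b i)) (fun ω => by ring)]
    exact key2 b b
  rw [key4 a b, key3 a b, key3 b a, key2 a b, key2a, key2b, key1 a, key1 b, integral_const]
  have e1 : (∑ i, b i ^ 2 * a i) = ∑ i, a i * b i ^ 2 :=
    Finset.sum_congr rfl fun i _ => by ring
  have e2 : (∑ i, a i * a i) = ∑ i, a i ^ 2 := Finset.sum_congr rfl fun i _ => (sq _).symm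
  have e3 : (∑ i, b i * b i) = ∑ i, b i ^ 2 := Finset.sum_congr rfl fun i _ => (sq _).symm
  rw [e1, e2, e3]
  simp [measure_univ]
  ring
end

section
/- Let Φ be a symmetric positive semidefinite T×T matrix, γ > 0, n, T positive integers, and δ > 0 the solution of δ = (1/T)·tr(Φ·Q̄) where Q̄ = ((n/T)·Φ/(1+δ) + γ I_T)^{-1}. Then δ = (n(1+δ)/(T(1+δ)²))·(1/T)·tr(Φ² Q̄²) + γ·(1/T)·tr(Φ Q̄²), and consequently (n/(T(1+δ)²))·(1/T)·tr(Φ² Q̄²) ≤ δ/(1+δ) < 1. -/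
open Matrix

private lemma psd_smul {T : ℕ} {c : ℝ} (hc : 0 ≤ c) {A : Matrix (Fin T) (Fin T) ℝ}
    (hA : A.PosSemidef) : (c • A).PosSemidef := by
  refine Matrix.PosSemidef.of_dotProduct_mulVec_nonneg ?_ (fun x => ?_)
  · unfold Matrix.IsHermitian
    rw [conjTranspose_smul, hA.1.eq]
    simp
  · rw [smul_mulVec, dotProduct_smul]
    exact mul_nonneg hc (hA.dotProduct_mulVec_nonneg x)

private lemma psd_trace_nonneg {T : ℕ} {A : Matrix (Fin T) (Fin T) ℝ}
    (hA : A.PosSemidef) : 0 ≤ A.trace := by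
  rw [Matrix.trace]
  apply Finset.sum_nonneg
  intro i _
  have := hA.dotProduct_mulVec_nonneg (Pi.single i 1)
  simpa [mulVec_single, dotProduct_single] using this

/-- If `δ > 0` satisfies `δ = (1/T)tr(Φ Q̄)` with
`Q̄ = ((n/T)Φ/(1+δ) + γI_T)⁻¹`, then
`δ = (n(1+δ)/(T(1+δ)²))·(1/T)tr(Φ²Q̄²) + γ·(1/T)tr(ΦQ̄²)` and consequently
`(n/(T(1+δ)²))·(1/T)tr(Φ²Q̄²) ≤ δ/(1+δ) < 1`. -/
theorem delta_trace_identity {T n : ℕ} (hT : 0 < T) (hn : 0 < n)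
    (γ : ℝ) (hγ : 0 < γ)
    (Φ : Matrix (Fin T) (Fin T) ℝ) (hΦ : Φ.PosSemidef) (δ : ℝ) (hδ : 0 < δ)
    (Qb : Matrix (Fin T) (Fin T) ℝ)
    (hQb : Qb = ((((n : ℝ) / T) / (1 + δ)) • Φ + γ • (1 : Matrix (Fin T) (Fin T) ℝ))⁻¹)
    (hfix : δ = (1 / T : ℝ) * (Φ * Qb).trace) :
    δ = ((n : ℝ) * (1 + δ) / (T * (1 + δ) ^ 2)) * ((1 / T : ℝ) * (Φ ^ 2 * Qb ^ 2).trace)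
          + γ * ((1 / T : ℝ) * (Φ * Qb ^ 2).trace) ∧
    ((n : ℝ) / (T * (1 + δ) ^ 2)) * ((1 / T : ℝ) * (Φ ^ 2 * Qb ^ 2).trace) ≤ δ / (1 + δ) ∧
    δ / (1 + δ) < 1 := by
  have hTpos : (0 : ℝ) < T := by exact_mod_cast hT
  have hnpos : (0 : ℝ) < n := by exact_mod_cast hn
  have h1δ : (0 : ℝ) < 1 + δ := by linarith
  set c : ℝ := ((n : ℝ) / T) / (1 + δ) with hc
  have hcpos : 0 < c := by positivity
  set A : Matrix (Fin T) (Fin T) ℝ :=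
    c • Φ + γ • (1 : Matrix (Fin T) (Fin T) ℝ) with hA
  have hApd : A.PosDef := by
    refine Matrix.PosDef.posSemidef_add (psd_smul hcpos.le hΦ) ?_
    have h1 : (γ • (1 : Matrix (Fin T) (Fin T) ℝ)) = Matrix.diagonal (fun _ => γ) := by
      ext i j
      by_cases h : i = j <;> simp [Matrix.one_apply, h]
    rw [h1]
    exact Matrix.posDef_diagonal_iff.mpr fun _ => hγ
  have hAunit : IsUnit A.det := hApd.det_pos.ne'.isUnit
  have hQbA : Qb * A = 1 := by rw [hQb]; exact Matrix.nonsing_inv_mul A hAunit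
  -- key: Φ * Qb = Φ * Qb^2 * A = c • (Φ² Qb²-ish) + γ • (Φ Qb²)
  have hQb2A : Qb ^ 2 * A = Qb := by
    rw [pow_two, Matrix.mul_assoc, hQbA, Matrix.mul_one]
  have key : Φ * Qb = c • (Φ * Qb ^ 2 * Φ) + γ • (Φ * Qb ^ 2) := by
    calc Φ * Qb = Φ * (Qb ^ 2 * A) := by rw [hQb2A]
    _ = Φ * Qb ^ 2 * A := by rw [Matrix.mul_assoc]
    _ = c • (Φ * Qb ^ 2 * Φ) + γ • (Φ * Qb ^ 2) := by
        rw [hA, Matrix.mul_add, Matrix.mul_smul, Matrix.mul_smul, Matrix.mul_one]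
  have htr : (Φ * Qb).trace = c * (Φ ^ 2 * Qb ^ 2).trace + γ * (Φ * Qb ^ 2).trace := by
    rw [key, trace_add, trace_smul, trace_smul]
    have : (Φ * Qb ^ 2 * Φ).trace = (Φ ^ 2 * Qb ^ 2).trace := by
      rw [Matrix.trace_mul_comm, ← Matrix.mul_assoc, ← pow_two]
    rw [this]
    simp [smul_eq_mul]
  -- positivity of the traces
  have hQbsd : Qb.PosSemidef := by rw [hQb]; exact hApd.posSemidef.inv
  have hFQ2 : 0 ≤ (Φ * Qb ^ 2).trace := by
    have h1 : (Φ * Qb ^ 2).trace = (Qb * Φ * Qb).trace := by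
      rw [pow_two, ← Matrix.mul_assoc, Matrix.trace_mul_comm, Matrix.mul_assoc]
    rw [h1]
    have h2 : (Qb * Φ * Qb).PosSemidef := by
      have := hΦ.mul_mul_conjTranspose_same Qb
      rwa [hQbsd.isHermitian.eq] at this
    exact psd_trace_nonneg h2
  have hF2Q2 : 0 ≤ (Φ ^ 2 * Qb ^ 2).trace := by
    have h1 : (Φ ^ 2 * Qb ^ 2).trace = (Qb * Φ ^ 2 * Qb).trace := by
      rw [pow_two (Qb), ← Matrix.mul_assoc, Matrix.trace_mul_comm, Matrix.mul_assoc]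
    rw [h1]
    have h2 : (Qb * Φ ^ 2 * Qb).PosSemidef := by
      have := (hΦ.pow 2).mul_mul_conjTranspose_same Qb
      rwa [hQbsd.isHermitian.eq] at this
    exact psd_trace_nonneg h2
  -- main identity
  set t2 := (1 / T : ℝ) * (Φ ^ 2 * Qb ^ 2).trace with ht2
  set t1 := (1 / T : ℝ) * (Φ * Qb ^ 2).trace with ht1
  have ht2nn : 0 ≤ t2 := by positivity
  have ht1nn : 0 ≤ t1 := by positivity
  have hδeq : δ = c * t2 + γ * t1 := by
    rw [hfix, htr, ht2, ht1]; ring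
  have hden : ((T:ℝ) * (1 + δ) ^ 2) ≠ 0 := by positivity
  have hcoef : ((n : ℝ) * (1 + δ) / (T * (1 + δ) ^ 2)) = c := by
    rw [hc, div_div, div_eq_div_iff hden (by positivity)]; ring
  refine ⟨by rw [hcoef]; exact hδeq, ?_, ?_⟩
  · have hcoef2 : ((n : ℝ) / (T * (1 + δ) ^ 2)) = c / (1 + δ) := by
      rw [hc, div_div, div_div, div_eq_div_iff hden (by positivity)]; ring
    rw [hcoef2]
    have : c * t2 ≤ δ := by nlinarith
    rw [div_mul_eq_mul_div, div_le_div_iff₀ h1δ h1δ]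
    nlinarith
  · rw [div_lt_one h1δ]; linarith
end
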